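/- Assume there are constants 0 < b ≤ B such that b ≤ Λ*_t(y) ≤ B for every t and every y with p(y) > 0. Then for every vector v ∈ ℝ^{N'}, E[Σ_{t=1}^{N} ⟨ξ_t(y), v⟩²] ≥ ρ_s·‖v‖₂², where ρ_s = b·T·e^{−h·b}·e^{−h·B·(N'−1)} and T = N·h; equivalently, the matrix E[Σ_{t=1}^{N} ξ_t(y) ⊗ ξ_t(y)] − ρ_s·I_{N'} is positive semidefinite. -/

import Mathlib

open Finset
open scoped BigOperators RealInnerProductSpace

noncomputable section

/-- Real value of a Boolean: `1` if `true`, `0` if `false`. -/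
def bval (b : Bool) : ℝ := if b then 1 else 0

/-- The time window of indices `-N'+1, …, N`. -/
def window (N N' : ℕ) : Finset ℤ := Finset.Icc (-(N' : ℤ) + 1) (N : ℤ)

/-- The probability mass function of the discrete-time Bernoulli process with
true conditional intensities `Λ`. -/
def seqPMF (N N' : ℕ) (h : ℝ) (Λ : ℤ → (ℤ → Bool) → ℝ) (y : ℤ → Bool) : ℝ :=
  ∏ t ∈ window N N',
    ((1 - bval (y t)) * Real.exp (-(h * Λ t y))
      + bval (y t) * (1 - Real.exp (-(h * Λ t y))))

/-- Extension of a window-indexed binary sequence to all of `ℤ` (by `false`). -/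
def extSeq (N N' : ℕ) (w : ↥(window N N') → Bool) : ℤ → Bool :=
  fun i => if hi : i ∈ window N N' then w ⟨i, hi⟩ else false

/-- Expectation with respect to the law of the process. -/
def expect (N N' : ℕ) (h : ℝ) (Λ : ℤ → (ℤ → Bool) → ℝ) (f : (ℤ → Bool) → ℝ) : ℝ :=
  ∑ w : ↥(window N N') → Bool, seqPMF N N' h Λ (extSeq N N' w) * f (extSeq N N' w)

/-- The link function `φ(x) = 1 - e^{-x}`. -/
def phi (x : ℝ) : ℝ := 1 - Real.exp (-x)

/-- Expectation of a vector-valued statistic with respect to the law of the process. -/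
def expectVec {E : Type*} [AddCommMonoid E] [Module ℝ E]
    (N N' : ℕ) (h : ℝ) (Λ : ℤ → (ℤ → Bool) → ℝ) (f : (ℤ → Bool) → E) : E :=
  ∑ w : ↥(window N N') → Bool, seqPMF N N' h Λ (extSeq N N' w) • f (extSeq N N' w)

/-- The history vector `ξ_t(y) ∈ ℝ^{N'}` with `l`-th entry `y_{t-l}`,
`l = 1, …, N'` (here the index `l : Fin N'` represents `l+1`). -/
def xi (N' : ℕ) (t : ℤ) (y : ℤ → Bool) : EuclideanSpace ℝ (Fin N') :=
  WithLp.toLp 2 (fun l : Fin N' => bval (y (t - ((l : ℕ) + 1 : ℕ))))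

namespace XiAux

variable (h : ℝ) (Λ : ℤ → (ℤ → Bool) → ℝ)

/-- one Bernoulli factor -/
def G (t : ℤ) (y : ℤ → Bool) : ℝ :=
  (1 - bval (y t)) * Real.exp (-(h * Λ t y)) + bval (y t) * (1 - Real.exp (-(h * Λ t y)))

lemma seqPMF_eq (N N' : ℕ) (y : ℤ → Bool) :
    seqPMF N N' h Λ y = ∏ t ∈ window N N', G h Λ t y := rfl

lemma G_false (t : ℤ) (y : ℤ → Bool) (hy : y t = false) :
    G h Λ t y = Real.exp (-(h * Λ t y)) := by simp [G, hy, bval]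

lemma G_true (t : ℤ) (y : ℤ → Bool) (hy : y t = true) :
    G h Λ t y = 1 - Real.exp (-(h * Λ t y)) := by simp [G, hy, bval]

/-- membership mask -/
def mask (S A : Finset ℤ) (z : ℤ → Bool) : ℤ → Bool :=
  fun i => if i ∈ S then decide (i ∈ A) else z i

variable (N N' : ℕ)

lemma G_congr
    (hdep : ∀ (t : ℤ) (y y' : ℤ → Bool),
      (∀ i ∈ window N N', i < t → y i = y' i) → Λ t y = Λ t y')
    (t : ℤ) (y y' : ℤ → Bool) (h1 : y t = y' t)
    (h2 : ∀ i ∈ window N N', i < t → y i = y' i) : G h Λ t y = G h Λ t y' := by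
  rw [G, G, h1, hdep t y y' h2]

lemma tail_one
    (hdep : ∀ (t : ℤ) (y y' : ℤ → Bool),
      (∀ i ∈ window N N', i < t → y i = y' i) → Λ t y = Λ t y')
    (S : Finset ℤ) (z : ℤ → Bool) :
    ∑ A ∈ S.powerset, ∏ t ∈ S, G h Λ t (mask S A z) = 1 := by
  induction S using Finset.induction_on_max generalizing z with
  | empty => simp [mask]
  | insert a s hmax ih =>
    have ha : a ∉ s := fun hc => lt_irrefl a (hmax a hc)
    rw [Finset.sum_powerset_insert ha]
    have hmask1 : ∀ A ∈ s.powerset,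
        mask (insert a s) A z = mask s A (Function.update z a false) := by
      intro A hA
      rw [Finset.mem_powerset] at hA
      funext i
      by_cases hia : i = a
      · subst hia
        have : i ∉ A := fun hc => ha (hA hc)
        simp [mask, ha, this]
      · by_cases his : i ∈ s
        · simp [mask, his, hia]
        · simp [mask, his, hia, Function.update_of_ne hia]
    have hmask2 : ∀ A ∈ s.powerset,
        mask (insert a s) (insert a A) z = mask s A (Function.update z a true) := by
      intro A hA
      rw [Finset.mem_powerset] at hA
      funext i
      by_cases hia : i = a
      · subst hia; simp [mask, ha]
      · by_cases his : i ∈ s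
        · simp [mask, his, hia]
        · simp [mask, his, hia, Function.update_of_ne hia]
    have key : ∀ A ∈ s.powerset,
        (∏ t ∈ insert a s, G h Λ t (mask (insert a s) A z))
          + (∏ t ∈ insert a s, G h Λ t (mask (insert a s) (insert a A) z))
        = ∏ t ∈ s, G h Λ t (mask s A (Function.update z a false)) := by
      intro A hA
      rw [hmask1 A hA, hmask2 A hA, Finset.prod_insert ha, Finset.prod_insert ha]
      set yf := mask s A (Function.update z a false) with hyf
      set yt := mask s A (Function.update z a true) with hyt
      have hne : ∀ i : ℤ, i ≠ a → yf i = yt i := by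
        intro i hia
        by_cases his : i ∈ s
        · simp [hyf, hyt, mask, his]
        · simp [hyf, hyt, mask, his, Function.update_of_ne hia]
      have hprod : ∏ t ∈ s, G h Λ t yf = ∏ t ∈ s, G h Λ t yt := by
        apply Finset.prod_congr rfl
        intro t hts
        exact G_congr h Λ N N' hdep t _ _ (hne t (ne_of_lt (hmax t hts)))
          (fun i _ hit => hne i (ne_of_lt (hit.trans (hmax t hts))))
      have hfa : yf a = false := by
        simp [hyf, mask, ha]
      have hta : yt a = true := by
        simp [hyt, mask, ha]
      have hΛ : Λ a yf = Λ a yt := hdep a yf yt (fun i _ hia => hne i (ne_of_lt hia))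
      rw [G_false h Λ a yf hfa, G_true h Λ a yt hta, hΛ, hprod]
      ring
    rw [← Finset.sum_add_distrib, Finset.sum_congr rfl key, ih (Function.update z a false)]

lemma lambda_bounds (hh : 0 < h)
    (hdep : ∀ (t : ℤ) (y y' : ℤ → Bool),
      (∀ i ∈ window N N', i < t → y i = y' i) → Λ t y = Λ t y')
    (b B : ℝ) (hb : 0 < b)
    (hstar : ∀ t ∈ window N N', ∀ y : ℤ → Bool,
      0 < seqPMF N N' h Λ y → b ≤ Λ t y ∧ Λ t y ≤ B) :
    ∀ t ∈ window N N', ∀ y, b ≤ Λ t y ∧ Λ t y ≤ B := by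
  have H : ∀ k : ℕ, ∀ t ∈ window N N', t < (-(N' : ℤ) + 1) + k →
      ∀ y, b ≤ Λ t y ∧ Λ t y ≤ B := by
    intro k
    induction k with
    | zero =>
      intro t ht hlt y
      exfalso
      simp only [window, Finset.mem_Icc] at ht
      omega
    | succ k ih =>
      intro t ht hlt y
      set y' : ℤ → Bool := fun i => if i ∈ window N N' ∧ i < t then y i else false with hy'
      have hpos : 0 < seqPMF N N' h Λ y' := by
        rw [seqPMF_eq]
        apply Finset.prod_pos
        intro s hs
        rcases Bool.eq_false_or_eq_true (y' s) with hys | hys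
        case inr => rw [G_false h Λ s y' hys]; exact Real.exp_pos _
        · have hsw : s ∈ window N N' ∧ s < t := by
            by_contra hc
            rw [hy'] at hys; simp only [hc, if_false] at hys; exact Bool.false_ne_true hys
          have hslt : s < (-(N' : ℤ) + 1) + k := by push_cast at hlt ⊢; omega
          have hbs : b ≤ Λ s y' := (ih s hsw.1 hslt y').1
          rw [G_true h Λ s y' hys]
          have : Real.exp (-(h * Λ s y')) < 1 := by
            rw [Real.exp_lt_one_iff]
            nlinarith
          linarith
      have heq : Λ t y = Λ t y' := by
        apply hdep t y y'
        intro i hi hit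
        simp [hy', hi, hit]
      rw [heq]
      exact hstar t ht y' hpos
  intro t ht y
  refine H (N + N') t ht ?_ y
  simp only [window, Finset.mem_Icc] at ht
  push_cast
  omega

lemma G_pos (hh : 0 < h)
    (hdep : ∀ (t : ℤ) (y y' : ℤ → Bool),
      (∀ i ∈ window N N', i < t → y i = y' i) → Λ t y = Λ t y')
    (b B : ℝ) (hb : 0 < b)
    (hstar : ∀ t ∈ window N N', ∀ y : ℤ → Bool,
      0 < seqPMF N N' h Λ y → b ≤ Λ t y ∧ Λ t y ≤ B) :
    ∀ t ∈ window N N', ∀ y, 0 < G h Λ t y := by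
  intro t ht y
  rcases Bool.eq_false_or_eq_true (y t) with hy | hy
  case inr => rw [G_false h Λ t y hy]; exact Real.exp_pos _
  · rw [G_true h Λ t y hy]
    have hbt : b ≤ Λ t y := (lambda_bounds h Λ N N' hh hdep b B hb hstar t ht y).1
    have : Real.exp (-(h * Λ t y)) < 1 := by
      rw [Real.exp_lt_one_iff]; nlinarith
    linarith

lemma sum_powerset_union (s t : Finset ℤ) (f : Finset ℤ → ℝ) (hst : Disjoint s t) :
    ∑ A ∈ (s ∪ t).powerset, f A = ∑ AB ∈ s.powerset, ∑ C ∈ t.powerset, f (AB ∪ C) := by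
  induction s using Finset.induction_on generalizing f with
  | empty => simp
  | @insert a s ha ih =>
    have hst' : Disjoint s t := (Finset.disjoint_insert_left.1 hst).2
    have hat : a ∉ t := (Finset.disjoint_insert_left.1 hst).1
    have hasu : a ∉ s ∪ t := by simp [ha, hat]
    rw [Finset.insert_union, Finset.sum_powerset_insert hasu,
      Finset.sum_powerset_insert ha, ih f hst', ih (fun A => f (insert a A)) hst']
    congr 1
    apply Finset.sum_congr rfl
    intro B hB
    apply Finset.sum_congr rfl
    intro C hC
    rw [Finset.insert_union]

lemma sum_ext (F : (ℤ → Bool) → ℝ) :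
    ∑ w : ↥(window N N') → Bool, F (extSeq N N' w)
      = ∑ A ∈ (window N N').powerset, F (mask (window N N') A (fun _ => false)) := by
  apply Finset.sum_bij'
    (i := fun w _ => (window N N').filter (fun s => extSeq N N' w s = true))
    (j := fun A _ => fun s => decide ((s : ℤ) ∈ A))
  · intro w _
    exact Finset.mem_powerset.2 (Finset.filter_subset _ _)
  · intro A _
    exact Finset.mem_univ _
  · intro w _
    funext s
    simp [extSeq, s.2]
  · intro A hA
    rw [Finset.mem_powerset] at hA
    ext i
    simp only [Finset.mem_filter]
    constructor
    · rintro ⟨hiw, hi⟩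
      simp [extSeq, hiw] at hi
      exact hi
    · intro hiA
      refine ⟨hA hiA, ?_⟩
      simp [extSeq, hA hiA, hiA]
  · intro w _
    congr 1
    funext i
    by_cases hiw : i ∈ window N N'
    · simp [extSeq, mask, hiw]
    · simp [extSeq, mask, hiw]



lemma pattern_lb (hN : 1 ≤ N) (hN' : 1 ≤ N') (hh : 0 < h)
    (hdep : ∀ (t : ℤ) (y y' : ℤ → Bool),
      (∀ i ∈ window N N', i < t → y i = y' i) → Λ t y = Λ t y')
    (b B : ℝ) (hb : 0 < b) (hbB : b ≤ B)
    (hstar : ∀ t ∈ window N N', ∀ y : ℤ → Bool,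
      0 < seqPMF N N' h Λ y → b ≤ Λ t y ∧ Λ t y ≤ B)
    (t t₀ : ℤ) (ht1 : 1 ≤ t) (ht2 : t ≤ (N : ℤ))
    (h01 : t - N' ≤ t₀) (h02 : t₀ ≤ t - 1) :
    (1 - Real.exp (-(h * b))) * Real.exp (-(h * B)) ^ (N' - 1)
      ≤ ∑ A ∈ (window N N').powerset,
          (∏ s ∈ window N N', G h Λ s (mask (window N N') A (fun _ => false)))
            * (∏ s ∈ Finset.Icc (t - (N' : ℤ)) (t - 1),
                 (if mask (window N N') A (fun _ => false) s = decide (s = t₀)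
                   then (1:ℝ) else 0)) := by
  classical
  set z₀ : ℤ → Bool := fun _ => false with hz₀
  set Bf := Finset.Icc (-(N' : ℤ) + 1) (t - N' - 1) with hBf
  set Pw := Finset.Icc (t - (N' : ℤ)) (t - 1) with hPw
  set Af := Finset.Icc t (N : ℤ) with hAf
  have hwin : window N N' = Bf ∪ (Pw ∪ Af) := by
    ext i
    simp only [window, hBf, hPw, hAf, Finset.mem_Icc, Finset.mem_union]
    omega
  have hmemBf : ∀ i : ℤ, i ∈ Bf ↔ -(N' : ℤ) + 1 ≤ i ∧ i ≤ t - N' - 1 := by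
    intro i; rw [hBf, Finset.mem_Icc]
  have hmemPw : ∀ i : ℤ, i ∈ Pw ↔ t - N' ≤ i ∧ i ≤ t - 1 := by
    intro i; rw [hPw, Finset.mem_Icc]
  have hmemAf : ∀ i : ℤ, i ∈ Af ↔ t ≤ i ∧ i ≤ (N : ℤ) := by
    intro i; rw [hAf, Finset.mem_Icc]
  have hmemW : ∀ i : ℤ, i ∈ window N N' ↔ -(N' : ℤ) + 1 ≤ i ∧ i ≤ (N : ℤ) := by
    intro i; rw [window, Finset.mem_Icc]
  have d2 : Disjoint Pw Af := by
    simp only [Finset.disjoint_left]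
    intro i hi hi'
    rw [hmemPw] at hi; rw [hmemAf] at hi'; omega
  have d1 : Disjoint Bf (Pw ∪ Af) := by
    simp only [Finset.disjoint_left, Finset.mem_union]
    intro i hi hi'
    rw [hmemBf] at hi
    rcases hi' with hi' | hi'
    · rw [hmemPw] at hi'; omega
    · rw [hmemAf] at hi'; omega
  have hBfW : Bf ⊆ window N N' := by
    intro i hi; rw [hmemBf] at hi; rw [hmemW]; omega
  have hPwW : Pw ⊆ window N N' := by
    intro i hi; rw [hmemPw] at hi; rw [hmemW]; omega
  have hAfW : Af ⊆ window N N' := by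
    intro i hi; rw [hmemAf] at hi; rw [hmemW]; omega
  have ht₀Pw : t₀ ∈ Pw := by rw [hmemPw]; omega
  -- splitting the powerset sum
  have e1 : ∀ f : Finset ℤ → ℝ,
      ∑ A ∈ (window N N').powerset, f A
        = ∑ Ab ∈ Bf.powerset, ∑ Ap ∈ Pw.powerset, ∑ Aa ∈ Af.powerset,
            f (Ab ∪ (Ap ∪ Aa)) := by
    intro f
    rw [hwin, sum_powerset_union _ _ _ d1]
    exact Finset.sum_congr rfl (fun Ab _ => sum_powerset_union _ _ _ d2)
  rw [e1 (fun A => (∏ s ∈ window N N', G h Λ s (mask (window N N') A z₀))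
      * (∏ s ∈ Finset.Icc (t - (N' : ℤ)) (t - 1),
          (if mask (window N N') A z₀ s = decide (s = t₀) then (1:ℝ) else 0)))]
  -- the value of the mask on the union
  have hmaskval : ∀ (A : Finset ℤ) (i : ℤ), i ∈ window N N' →
      mask (window N N') A z₀ i = decide (i ∈ A) := by
    intro A i hi; simp [mask, hi]
  -- indicator simplification
  have hind : ∀ (Ab Ap Aa : Finset ℤ), Ab ⊆ Bf → Ap ⊆ Pw → Aa ⊆ Af →
      ((∏ s ∈ Finset.Icc (t - (N' : ℤ)) (t - 1),
          (if mask (window N N') (Ab ∪ (Ap ∪ Aa)) z₀ s = decide (s = t₀)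
            then (1:ℝ) else 0))
        = if Ap = {t₀} then 1 else 0) := by
    intro Ab Ap Aa hAb hAp hAa
    rw [← hPw]
    have hAmem : ∀ s ∈ Pw, (s ∈ Ab ∪ (Ap ∪ Aa) ↔ s ∈ Ap) := by
      intro s hs
      simp only [Finset.mem_union]
      constructor
      · rintro (hc | hc | hc)
        · exfalso
          have h1 := (hmemBf s).1 (hAb hc); have h2 := (hmemPw s).1 hs; omega
        · exact hc
        · exfalso
          have h1 := (hmemAf s).1 (hAa hc); have h2 := (hmemPw s).1 hs; omega
      · intro hc; exact Or.inr (Or.inl hc)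
    by_cases hcase : Ap = {t₀}
    · rw [if_pos hcase]
      apply Finset.prod_eq_one
      intro s hs
      rw [if_pos]
      rw [hmaskval _ s (hPwW hs)]
      apply decide_eq_decide.2
      rw [hAmem s hs, hcase, Finset.mem_singleton]
    · rw [if_neg hcase]
      have : ∃ x ∈ Pw, ¬ ((x ∈ Ap) ↔ x = t₀) := by
        by_contra hc
        push_neg at hc
        exact hcase (Finset.ext (fun x => by
          constructor
          · intro hx
            rw [Finset.mem_singleton]
            exact (hc x (hAp hx)).1 hx
          · intro hx
            rw [Finset.mem_singleton] at hx
            subst hx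
            exact (hc x ht₀Pw).2 rfl))
      obtain ⟨x, hxPw, hx⟩ := this
      apply Finset.prod_eq_zero hxPw
      rw [if_neg]
      rw [hmaskval _ x (hPwW hxPw)]
      intro hc
      rw [decide_eq_decide] at hc
      exact hx (((hAmem x hxPw).symm.trans hc))
  -- collapse the middle sum
  have e2 : ∀ Ab ∈ Bf.powerset,
      (∑ Ap ∈ Pw.powerset, ∑ Aa ∈ Af.powerset,
          (∏ s ∈ window N N', G h Λ s (mask (window N N') (Ab ∪ (Ap ∪ Aa)) z₀))
            * (∏ s ∈ Finset.Icc (t - (N' : ℤ)) (t - 1),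
                (if mask (window N N') (Ab ∪ (Ap ∪ Aa)) z₀ s = decide (s = t₀)
                  then (1:ℝ) else 0)))
        = ∑ Aa ∈ Af.powerset,
            ∏ s ∈ window N N', G h Λ s (mask (window N N') (Ab ∪ ({t₀} ∪ Aa)) z₀) := by
    intro Ab hAb
    rw [Finset.mem_powerset] at hAb
    have step : ∀ Ap ∈ Pw.powerset,
        (∑ Aa ∈ Af.powerset,
          (∏ s ∈ window N N', G h Λ s (mask (window N N') (Ab ∪ (Ap ∪ Aa)) z₀))
            * (∏ s ∈ Finset.Icc (t - (N' : ℤ)) (t - 1),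
                (if mask (window N N') (Ab ∪ (Ap ∪ Aa)) z₀ s = decide (s = t₀)
                  then (1:ℝ) else 0)))
          = if Ap = {t₀} then
              (∑ Aa ∈ Af.powerset,
                ∏ s ∈ window N N', G h Λ s (mask (window N N') (Ab ∪ (Ap ∪ Aa)) z₀))
            else 0 := by
      intro Ap hAp
      rw [Finset.mem_powerset] at hAp
      have inner : ∀ Aa ∈ Af.powerset,
          (∏ s ∈ window N N', G h Λ s (mask (window N N') (Ab ∪ (Ap ∪ Aa)) z₀))
            * (∏ s ∈ Finset.Icc (t - (N' : ℤ)) (t - 1),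
                (if mask (window N N') (Ab ∪ (Ap ∪ Aa)) z₀ s = decide (s = t₀)
                  then (1:ℝ) else 0))
          = (∏ s ∈ window N N', G h Λ s (mask (window N N') (Ab ∪ (Ap ∪ Aa)) z₀))
            * (if Ap = {t₀} then 1 else 0) := by
        intro Aa hAa
        rw [Finset.mem_powerset] at hAa
        rw [hind Ab Ap Aa hAb hAp hAa]
      rw [Finset.sum_congr rfl inner, ← Finset.sum_mul, mul_ite, mul_one, mul_zero]
    rw [Finset.sum_congr rfl step, Finset.sum_ite_eq' Pw.powerset {t₀}]
    rw [if_pos (Finset.mem_powerset.2 (Finset.singleton_subset_iff.2 ht₀Pw))]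
  rw [Finset.sum_congr rfl e2]
  -- now factor the product per (Ab, Aa)
  have e3 : ∀ Ab ∈ Bf.powerset, ∀ Aa ∈ Af.powerset,
      (∏ s ∈ window N N', G h Λ s (mask (window N N') (Ab ∪ ({t₀} ∪ Aa)) z₀))
        = (∏ s ∈ Bf, G h Λ s (mask Bf Ab z₀))
          * ((∏ s ∈ Pw, G h Λ s (mask (window N N') (Ab ∪ {t₀}) z₀))
            * (∏ s ∈ Af, G h Λ s (mask Af Aa (mask (window N N') (Ab ∪ {t₀}) z₀)))) := by
    intro Ab hAb Aa hAa
    rw [Finset.mem_powerset] at hAb hAa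
    set y := mask (window N N') (Ab ∪ ({t₀} ∪ Aa)) z₀ with hy
    set zmid := mask (window N N') (Ab ∪ {t₀}) z₀ with hzmid
    have hval2 : ∀ i, i ∈ window N N' → i ≤ t - 1 → y i = zmid i := by
      intro i hiW hile
      rw [hy, hzmid]
      simp only [mask, if_pos hiW]
      apply decide_eq_decide.2
      simp only [Finset.mem_union, Finset.mem_singleton]
      constructor
      · rintro (hc | hc | hc)
        · exact Or.inl hc
        · exact Or.inr hc
        · exfalso; have := (hmemAf i).1 (hAa hc); omega
      · rintro (hc | hc)
        · exact Or.inl hc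
        · exact Or.inr (Or.inl hc)
    have hval1 : ∀ i, i ∈ Bf → y i = mask Bf Ab z₀ i := by
      intro i hiBf
      have hiW := hBfW hiBf
      rw [hy]
      simp only [mask, if_pos hiW, if_pos hiBf]
      apply decide_eq_decide.2
      simp only [Finset.mem_union, Finset.mem_singleton]
      have hib := (hmemBf i).1 hiBf
      have h2 := (hmemPw t₀).1 ht₀Pw
      constructor
      · rintro (hc | hc | hc)
        · exact hc
        · exfalso; omega
        · exfalso; have := (hmemAf i).1 (hAa hc); omega
      · intro hc; exact Or.inl hc
    have hprodW : (∏ s ∈ window N N', G h Λ s y)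
        = ∏ s ∈ Bf ∪ (Pw ∪ Af), G h Λ s y := Finset.prod_congr hwin (fun _ _ => rfl)
    rw [hprodW, Finset.prod_union d1, Finset.prod_union d2]
    congr 1
    · apply Finset.prod_congr rfl
      intro s hs
      apply G_congr h Λ N N' hdep s _ _ (hval1 s hs)
      intro i hiW hilt
      apply hval1
      rw [hmemBf]
      have hsb := (hmemBf s).1 hs
      have h2 := (hmemW i).1 hiW
      omega
    congr 1
    · apply Finset.prod_congr rfl
      intro s hs
      have hsb := (hmemPw s).1 hs
      apply G_congr h Λ N N' hdep s _ _ (hval2 s (hPwW hs) (by omega))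
      intro i hiW hilt
      exact hval2 i hiW (by omega)
    · apply Finset.prod_congr rfl
      intro s hs
      have hyA : y = mask Af Aa zmid := by
        funext i
        by_cases hiW : i ∈ window N N'
        · by_cases hiAf : i ∈ Af
          · rw [hy]
            simp only [mask, if_pos hiW, if_pos hiAf]
            apply decide_eq_decide.2
            simp only [Finset.mem_union, Finset.mem_singleton]
            have hia := (hmemAf i).1 hiAf
            have h2 := (hmemPw t₀).1 ht₀Pw
            constructor
            · rintro (hc | hc | hc)
              · exfalso; have := (hmemBf i).1 (hAb hc); omega
              · exfalso; omega
              · exact hc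
            · intro hc; exact Or.inr (Or.inr hc)
          · have hile : i ≤ t - 1 := by
              have := (hmemW i).1 hiW
              rw [hmemAf] at hiAf
              omega
            rw [show mask Af Aa zmid i = zmid i from by simp [mask, hiAf]]
            exact hval2 i hiW hile
        · have hiAf : i ∉ Af := fun hc => hiW (hAfW hc)
          rw [hy]
          simp only [mask, if_neg hiW, if_neg hiAf, hzmid]
      rw [hyA]
  rw [Finset.sum_congr rfl (fun Ab hAb => Finset.sum_congr rfl (e3 Ab hAb))]
  -- sum out the tail
  have htail : ∀ Ab ∈ Bf.powerset,
      (∑ Aa ∈ Af.powerset,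
        (∏ s ∈ Bf, G h Λ s (mask Bf Ab z₀))
          * ((∏ s ∈ Pw, G h Λ s (mask (window N N') (Ab ∪ {t₀}) z₀))
            * (∏ s ∈ Af, G h Λ s (mask Af Aa (mask (window N N') (Ab ∪ {t₀}) z₀)))))
        = (∏ s ∈ Bf, G h Λ s (mask Bf Ab z₀))
          * (∏ s ∈ Pw, G h Λ s (mask (window N N') (Ab ∪ {t₀}) z₀)) := by
    intro Ab _
    rw [← Finset.mul_sum, ← Finset.mul_sum, tail_one h Λ N N' hdep Af _, mul_one]
  rw [Finset.sum_congr rfl htail]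
  -- lower bound the middle product
  have hexp1 : (0:ℝ) < 1 - Real.exp (-(h * b)) := by
    have : Real.exp (-(h * b)) < 1 := by
      rw [Real.exp_lt_one_iff]; nlinarith
    linarith
  have hMid : ∀ Ab ∈ Bf.powerset,
      (1 - Real.exp (-(h * b))) * Real.exp (-(h * B)) ^ (N' - 1)
        ≤ ∏ s ∈ Pw, G h Λ s (mask (window N N') (Ab ∪ {t₀}) z₀) := by
    intro Ab hAb
    rw [Finset.mem_powerset] at hAb
    set zmid := mask (window N N') (Ab ∪ {t₀}) z₀ with hzmid
    have hzval : ∀ s ∈ Pw, zmid s = decide (s = t₀) := by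
      intro s hs
      have hsW := hPwW hs
      rw [hzmid]
      simp only [mask, if_pos hsW]
      apply decide_eq_decide.2
      simp only [Finset.mem_union, Finset.mem_singleton]
      constructor
      · rintro (hc | hc)
        · exfalso
          have h1 := (hmemBf s).1 (hAb hc); have h2 := (hmemPw s).1 hs; omega
        · exact hc
      · intro hc; exact Or.inr hc
    have key : ∀ s ∈ Pw,
        (if s = t₀ then 1 - Real.exp (-(h * b)) else Real.exp (-(h * B)))
          ≤ G h Λ s zmid := by
      intro s hs
      have hsW := hPwW hs
      have hbd := lambda_bounds h Λ N N' hh hdep b B hb hstar s hsW zmid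
      by_cases hst : s = t₀
      · rw [if_pos hst]
        have hzs : zmid s = true := by rw [hzval s hs, hst]; simp
        rw [G_true h Λ s zmid hzs]
        have : Real.exp (-(h * Λ s zmid)) ≤ Real.exp (-(h * b)) := by
          apply Real.exp_le_exp.2
          nlinarith [hbd.1]
        linarith
      · rw [if_neg hst]
        have hzs : zmid s = false := by
          rw [hzval s hs]
          simp [hst]
        rw [G_false h Λ s zmid hzs]
        apply Real.exp_le_exp.2
        nlinarith [hbd.2]
    have keynn : ∀ s ∈ Pw,
        (0:ℝ) ≤ (if s = t₀ then 1 - Real.exp (-(h * b)) else Real.exp (-(h * B))) := by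
      intro s _
      by_cases hst : s = t₀
      · rw [if_pos hst]; linarith
      · rw [if_neg hst]; exact (Real.exp_pos _).le
    have hlow := Finset.prod_le_prod keynn key
    have hloweq : (∏ s ∈ Pw, (if s = t₀ then 1 - Real.exp (-(h * b)) else Real.exp (-(h * B))))
        = (1 - Real.exp (-(h * b))) * Real.exp (-(h * B)) ^ (N' - 1) := by
      rw [Finset.prod_eq_mul_prod_sdiff_singleton_of_mem ht₀Pw, if_pos rfl]
      congr 1
      rw [Finset.prod_congr rfl (fun s hs => by
        rw [if_neg (fun hc => (Finset.mem_sdiff.1 hs).2 (Finset.mem_singleton.2 hc))]), Finset.prod_const]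
      · congr 1
        rw [Finset.card_sdiff_of_subset (Finset.singleton_subset_iff.2 ht₀Pw), Finset.card_singleton,
          hPw, Int.card_Icc]
        omega
    rw [hloweq] at hlow
    exact hlow
  -- sum the prefix weights
  have hPb_nonneg : ∀ Ab ∈ Bf.powerset, (0:ℝ) ≤ ∏ s ∈ Bf, G h Λ s (mask Bf Ab z₀) := by
    intro Ab _
    apply Finset.prod_nonneg
    intro s hs
    exact (G_pos h Λ N N' hh hdep b B hb hstar s (hBfW hs) _).le
  have hPb_one : ∑ Ab ∈ Bf.powerset, ∏ s ∈ Bf, G h Λ s (mask Bf Ab z₀) = 1 :=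
    tail_one h Λ N N' hdep Bf z₀
  calc (1 - Real.exp (-(h * b))) * Real.exp (-(h * B)) ^ (N' - 1)
      = (∑ Ab ∈ Bf.powerset, ∏ s ∈ Bf, G h Λ s (mask Bf Ab z₀))
          * ((1 - Real.exp (-(h * b))) * Real.exp (-(h * B)) ^ (N' - 1)) := by
        rw [hPb_one, one_mul]
    _ = ∑ Ab ∈ Bf.powerset, (∏ s ∈ Bf, G h Λ s (mask Bf Ab z₀))
          * ((1 - Real.exp (-(h * b))) * Real.exp (-(h * B)) ^ (N' - 1)) := by
        rw [Finset.sum_mul]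
    _ ≤ ∑ Ab ∈ Bf.powerset, (∏ s ∈ Bf, G h Λ s (mask Bf Ab z₀))
          * (∏ s ∈ Pw, G h Λ s (mask (window N N') (Ab ∪ {t₀}) z₀)) := by
        apply Finset.sum_le_sum
        intro Ab hAb
        exact mul_le_mul_of_nonneg_left (hMid Ab hAb) (hPb_nonneg Ab hAb)

def ind (N' : ℕ) (t t₀ : ℤ) (y : ℤ → Bool) : ℝ :=
  ∏ s ∈ Finset.Icc (t - (N' : ℤ)) (t - 1), (if y s = decide (s = t₀) then (1:ℝ) else 0)

lemma stepA (N' : ℕ) (v : EuclideanSpace ℝ (Fin N')) (t : ℤ) (y : ℤ → Bool) :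
    ∑ l : Fin N', (v l)^2 * ind N' t (t - (((l : ℕ) + 1 : ℕ) : ℤ)) y
      ≤ ⟪xi N' t y, v⟫ ^ 2 := by
  classical
  have hinner : ⟪xi N' t y, v⟫
      = ∑ j : Fin N', bval (y (t - (((j : ℕ) + 1 : ℕ) : ℤ))) * v j := by
    simp [PiLp.inner_apply, RCLike.inner_apply, xi, mul_comm]
  have hmemIcc : ∀ j : Fin N',
      t - (((j : ℕ) + 1 : ℕ) : ℤ) ∈ Finset.Icc (t - (N' : ℤ)) (t - 1) := by
    intro j
    have hj := j.isLt
    simp only [Finset.mem_Icc]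
    push_cast
    omega
  by_cases hex : ∃ l : Fin N', ∀ s ∈ Finset.Icc (t - (N' : ℤ)) (t - 1),
      y s = decide (s = t - (((l : ℕ) + 1 : ℕ) : ℤ))
  · obtain ⟨l₀, hl₀⟩ := hex
    have hI : ∀ l : Fin N',
        ind N' t (t - (((l : ℕ) + 1 : ℕ) : ℤ)) y = if l = l₀ then 1 else 0 := by
      intro l
      by_cases hl : l = l₀
      · subst hl
        rw [if_pos rfl, ind]
        apply Finset.prod_eq_one
        intro s hs
        rw [if_pos (hl₀ s hs)]
      · rw [if_neg hl, ind]
        apply Finset.prod_eq_zero (hmemIcc l)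
        rw [if_neg]
        rw [hl₀ _ (hmemIcc l)]
        simp only [decide_eq_decide]
        intro hc
        have h2 : t - (((l : ℕ) + 1 : ℕ) : ℤ) = t - (((l₀ : ℕ) + 1 : ℕ) : ℤ) := hc.2 trivial
        apply hl
        apply Fin.ext
        push_cast at h2
        omega
    have hbv : ∀ j : Fin N',
        bval (y (t - (((j : ℕ) + 1 : ℕ) : ℤ))) = if j = l₀ then 1 else 0 := by
      intro j
      rw [hl₀ _ (hmemIcc j)]
      by_cases hj : j = l₀
      · subst hj; simp [bval]
      · have hne : ¬ (t - (((j : ℕ) + 1 : ℕ) : ℤ) = t - (((l₀ : ℕ) + 1 : ℕ) : ℤ)) := by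
          intro hc
          apply hj
          apply Fin.ext
          push_cast at hc
          omega
        simp [bval, hne, hj]
        exact fun hc => hj (Fin.ext hc)
    have hinner2 : ⟪xi N' t y, v⟫ = v l₀ := by
      rw [hinner, Finset.sum_congr rfl (fun j _ => by rw [hbv j, ite_mul, one_mul, zero_mul])]
      rw [Finset.sum_ite_eq' Finset.univ l₀ v, if_pos (Finset.mem_univ _)]
    have hsum : ∑ l : Fin N', (v l)^2 * ind N' t (t - (((l : ℕ) + 1 : ℕ) : ℤ)) y
        = (v l₀)^2 := by
      rw [Finset.sum_congr rfl (fun l _ => by rw [hI l, mul_ite, mul_one, mul_zero])]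
      rw [Finset.sum_ite_eq' Finset.univ l₀ (fun l => (v l)^2), if_pos (Finset.mem_univ _)]
    rw [hsum, hinner2]
  · push_neg at hex
    have hI0 : ∀ l : Fin N', ind N' t (t - (((l : ℕ) + 1 : ℕ) : ℤ)) y = 0 := by
      intro l
      obtain ⟨s, hs, hys⟩ := hex l
      rw [ind]
      apply Finset.prod_eq_zero hs
      rw [if_neg hys]
    rw [Finset.sum_congr rfl (fun l _ => by rw [hI0 l, mul_zero]), Finset.sum_const,
      smul_zero]
    exact sq_nonneg _

end XiAux

/-- positive-definiteness of `E[∑_t ξ_t ⊗ ξ_t]`: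
for every `v ∈ ℝ^{N'}`, `E[∑_{t=1}^N ⟨ξ_t(y), v⟩²] ≥ ρ_s ‖v‖²` with
`ρ_s = b T e^{-h b} e^{-h B (N'-1)}` and `T = N h`. -/
theorem xi_xi_positive
    (N N' : ℕ) (hN : 1 ≤ N) (hN' : 1 ≤ N') (h : ℝ) (hh : 0 < h)
    (Λ : ℤ → (ℤ → Bool) → ℝ)
    (hdep : ∀ (t : ℤ) (y y' : ℤ → Bool),
      (∀ i ∈ window N N', i < t → y i = y' i) → Λ t y = Λ t y')
    (b B : ℝ) (hb : 0 < b) (hbB : b ≤ B)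
    (hstar : ∀ t ∈ window N N', ∀ y : ℤ → Bool,
      0 < seqPMF N N' h Λ y → b ≤ Λ t y ∧ Λ t y ≤ B) :
    ∀ v : EuclideanSpace ℝ (Fin N'),
      expect N N' h Λ (fun y => ∑ t ∈ Finset.Icc (1 : ℤ) (N : ℤ), ⟪xi N' t y, v⟫ ^ 2)
        ≥ (b * ((N : ℝ) * h) * Real.exp (-(h * b))
            * Real.exp (-(h * B * ((N' : ℝ) - 1)))) * ‖v‖ ^ 2 := by
  intro v
  classical
  rw [ge_iff_le]
  have hnorm : ∑ l : Fin N', (v l)^2 = ‖v‖^2 := by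
    rw [EuclideanSpace.norm_eq, Real.sq_sqrt (by positivity)]
    exact Finset.sum_congr rfl (fun i _ => by rw [Real.norm_eq_abs, sq_abs])
  have hGpos := XiAux.G_pos h Λ N N' hh hdep b B hb hstar
  have hpmf_nonneg : ∀ y : ℤ → Bool, 0 ≤ seqPMF N N' h Λ y := by
    intro y
    rw [XiAux.seqPMF_eq]
    exact Finset.prod_nonneg (fun s hs => (hGpos s hs y).le)
  have htrans : expect N N' h Λ
        (fun y => ∑ t ∈ Finset.Icc (1 : ℤ) (N : ℤ), ⟪xi N' t y, v⟫ ^ 2)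
      = ∑ A ∈ (window N N').powerset,
          seqPMF N N' h Λ (XiAux.mask (window N N') A (fun _ => false))
            * ∑ t ∈ Finset.Icc (1 : ℤ) (N : ℤ),
                ⟪xi N' t (XiAux.mask (window N N') A (fun _ => false)), v⟫ ^ 2 :=
    XiAux.sum_ext N N'
      (fun y => seqPMF N N' h Λ y * ∑ t ∈ Finset.Icc (1 : ℤ) (N : ℤ), ⟪xi N' t y, v⟫ ^ 2)
  rw [htrans]
  have hpt : ∀ A ∈ (window N N').powerset,
      seqPMF N N' h Λ (XiAux.mask (window N N') A (fun _ => false))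
        * (∑ t ∈ Finset.Icc (1 : ℤ) (N : ℤ), ∑ l : Fin N',
            (v l)^2 * XiAux.ind N' t (t - (((l : ℕ) + 1 : ℕ) : ℤ))
              (XiAux.mask (window N N') A (fun _ => false)))
      ≤ seqPMF N N' h Λ (XiAux.mask (window N N') A (fun _ => false))
        * ∑ t ∈ Finset.Icc (1 : ℤ) (N : ℤ),
            ⟪xi N' t (XiAux.mask (window N N') A (fun _ => false)), v⟫ ^ 2 := by
    intro A hA
    apply mul_le_mul_of_nonneg_left _ (hpmf_nonneg _)
    apply Finset.sum_le_sum
    intro t ht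
    exact XiAux.stepA N' v t _
  refine le_trans ?_ (Finset.sum_le_sum hpt)
  have hre : (∑ A ∈ (window N N').powerset,
        seqPMF N N' h Λ (XiAux.mask (window N N') A (fun _ => false))
          * (∑ t ∈ Finset.Icc (1 : ℤ) (N : ℤ), ∑ l : Fin N',
              (v l)^2 * XiAux.ind N' t (t - (((l : ℕ) + 1 : ℕ) : ℤ))
                (XiAux.mask (window N N') A (fun _ => false))))
      = ∑ t ∈ Finset.Icc (1 : ℤ) (N : ℤ), ∑ l : Fin N',
          (v l)^2 * ∑ A ∈ (window N N').powerset,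
            seqPMF N N' h Λ (XiAux.mask (window N N') A (fun _ => false))
              * XiAux.ind N' t (t - (((l : ℕ) + 1 : ℕ) : ℤ))
                  (XiAux.mask (window N N') A (fun _ => false)) := by
    calc (∑ A ∈ (window N N').powerset,
        seqPMF N N' h Λ (XiAux.mask (window N N') A (fun _ => false))
          * (∑ t ∈ Finset.Icc (1 : ℤ) (N : ℤ), ∑ l : Fin N',
              (v l)^2 * XiAux.ind N' t (t - (((l : ℕ) + 1 : ℕ) : ℤ))
                (XiAux.mask (window N N') A (fun _ => false))))
        = ∑ A ∈ (window N N').powerset, ∑ t ∈ Finset.Icc (1 : ℤ) (N : ℤ), ∑ l : Fin N',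
            seqPMF N N' h Λ (XiAux.mask (window N N') A (fun _ => false))
              * ((v l)^2 * XiAux.ind N' t (t - (((l : ℕ) + 1 : ℕ) : ℤ))
                (XiAux.mask (window N N') A (fun _ => false))) := by
          apply Finset.sum_congr rfl
          intro A _
          rw [Finset.mul_sum]
          exact Finset.sum_congr rfl (fun t _ => by rw [Finset.mul_sum])
      _ = ∑ t ∈ Finset.Icc (1 : ℤ) (N : ℤ), ∑ A ∈ (window N N').powerset, ∑ l : Fin N',
            seqPMF N N' h Λ (XiAux.mask (window N N') A (fun _ => false))
              * ((v l)^2 * XiAux.ind N' t (t - (((l : ℕ) + 1 : ℕ) : ℤ))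
                (XiAux.mask (window N N') A (fun _ => false))) := Finset.sum_comm
      _ = ∑ t ∈ Finset.Icc (1 : ℤ) (N : ℤ), ∑ l : Fin N', ∑ A ∈ (window N N').powerset,
            seqPMF N N' h Λ (XiAux.mask (window N N') A (fun _ => false))
              * ((v l)^2 * XiAux.ind N' t (t - (((l : ℕ) + 1 : ℕ) : ℤ))
                (XiAux.mask (window N N') A (fun _ => false))) :=
          Finset.sum_congr rfl (fun t _ => Finset.sum_comm)
      _ = ∑ t ∈ Finset.Icc (1 : ℤ) (N : ℤ), ∑ l : Fin N',
            (v l)^2 * ∑ A ∈ (window N N').powerset,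
              seqPMF N N' h Λ (XiAux.mask (window N N') A (fun _ => false))
                * XiAux.ind N' t (t - (((l : ℕ) + 1 : ℕ) : ℤ))
                    (XiAux.mask (window N N') A (fun _ => false)) := by
          apply Finset.sum_congr rfl
          intro t _
          apply Finset.sum_congr rfl
          intro l _
          rw [Finset.mul_sum]
          exact Finset.sum_congr rfl (fun A _ => by ring)
  rw [hre]
  have hpat : ∀ t ∈ Finset.Icc (1 : ℤ) (N : ℤ), ∀ l : Fin N',
      (1 - Real.exp (-(h * b))) * Real.exp (-(h * B)) ^ (N' - 1)
        ≤ ∑ A ∈ (window N N').powerset,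
            seqPMF N N' h Λ (XiAux.mask (window N N') A (fun _ => false))
              * XiAux.ind N' t (t - (((l : ℕ) + 1 : ℕ) : ℤ))
                  (XiAux.mask (window N N') A (fun _ => false)) := by
    intro t ht l
    rw [Finset.mem_Icc] at ht
    have hl := l.isLt
    have := XiAux.pattern_lb h Λ N N' hN hN' hh hdep b B hb hbB hstar
      t (t - (((l : ℕ) + 1 : ℕ) : ℤ)) ht.1 ht.2
      (by push_cast; omega) (by push_cast; omega)
    exact this
  refine le_trans ?_ (Finset.sum_le_sum (fun t ht => Finset.sum_le_sum (fun l _ =>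
    mul_le_mul_of_nonneg_left (hpat t ht l) (sq_nonneg (v l)))))
  -- the remaining purely arithmetic bound
  have hconst : (∑ t ∈ Finset.Icc (1 : ℤ) (N : ℤ), ∑ l : Fin N',
        (v l)^2 * ((1 - Real.exp (-(h * b))) * Real.exp (-(h * B)) ^ (N' - 1)))
      = (N : ℝ) * (‖v‖^2 * ((1 - Real.exp (-(h * b))) * Real.exp (-(h * B)) ^ (N' - 1))) := by
    rw [Finset.sum_const]
    rw [show (∑ l : Fin N', (v l)^2 * ((1 - Real.exp (-(h * b)))
          * Real.exp (-(h * B)) ^ (N' - 1)))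
        = ‖v‖^2 * ((1 - Real.exp (-(h * b))) * Real.exp (-(h * B)) ^ (N' - 1)) from by
      rw [← Finset.sum_mul, hnorm]]
    have hcard : (Finset.Icc (1:ℤ) (N:ℤ)).card = N := by rw [Int.card_Icc]; omega
    rw [nsmul_eq_mul, hcard]
  rw [hconst]
  have hBexp : Real.exp (-(h * B * ((N' : ℝ) - 1))) = Real.exp (-(h * B)) ^ (N' - 1) := by
    rw [← Real.exp_nat_mul]
    congr 1
    have hc : ((N' - 1 : ℕ) : ℝ) = (N' : ℝ) - 1 := by
      have := Nat.cast_sub hN' (R := ℝ)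
      simpa using this
    rw [hc]
    ring
  have hkey : h * b * Real.exp (-(h * b)) ≤ 1 - Real.exp (-(h * b)) := by
    have h1 := Real.add_one_le_exp (h * b)
    have h2 : Real.exp (-(h * b)) * Real.exp (h * b) = 1 := by
      rw [← Real.exp_add]; simp
    nlinarith [Real.exp_pos (-(h * b))]
  calc (b * ((N : ℝ) * h) * Real.exp (-(h * b)) * Real.exp (-(h * B * ((N' : ℝ) - 1)))) * ‖v‖ ^ 2
      = (h * b * Real.exp (-(h * b)))
          * ((N : ℝ) * (‖v‖^2 * Real.exp (-(h * B)) ^ (N' - 1))) := by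
        rw [hBexp]; ring
    _ ≤ (1 - Real.exp (-(h * b)))
          * ((N : ℝ) * (‖v‖^2 * Real.exp (-(h * B)) ^ (N' - 1))) := by
        apply mul_le_mul_of_nonneg_right hkey
        positivity
    _ = (N : ℝ) * (‖v‖^2 * ((1 - Real.exp (-(h * b))) * Real.exp (-(h * B)) ^ (N' - 1))) := by
        ring
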